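/- arXiv:1211.3722 — 7 statements merged into one kernel-verified Lean document; each statement's English description precedes it below -/
import Mathlib

section
/- Let F_{ς₀}(V,E) = ({ς₀} ∪ V', E') where E' = {(ς,ς') | ς ∈ V and ς ↦ ς'} and V' = {ς' | (ς,ς') ∈ E'}. Then F_{ς₀} is monotone on ℘(State) × ℘(State × State) ordered componentwise by inclusion, and its least fixed point is exactly ({ς | ς₀ ↦* ς}, {(ς,ς') | ς₀ ↦* ς and ς ↦ ς'}), where ↦* is the reflexive–transitive closure of ↦. That is, the state component of the least fixed point is the set of states reachable from ς₀ and the edge component is the set of transitions out of reachable states. -/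
/-- The global transfer function `F ς₀ (V, E) = ({ς₀} ∪ V', E')` where
`E' = {(ς,ς') | ς ∈ V and ς ↦ ς'}` and `V' = {ς' | (ς,ς') ∈ E'}` is monotone on
`℘(State) × ℘(State × State)` (ordered componentwise by inclusion), and its least fixed
point is exactly the pair of the set of states reachable from `ς₀` and the set of
transitions out of reachable states. -/
theorem stmt_0 {State : Type*} (step : State → State → Prop) (ς₀ : State)
    (F : Set State × Set (State × State) → Set State × Set (State × State))
    (hF : ∀ V : Set State, ∀ E : Set (State × State),
      F (V, E) = ({ς₀} ∪ {ς' | ∃ ς ∈ V, step ς ς'}, {p | p.1 ∈ V ∧ step p.1 p.2})) :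
    Monotone F ∧
    IsLeast {p | F p = p}
      ({ς | Relation.ReflTransGen step ς₀ ς},
       {p | Relation.ReflTransGen step ς₀ p.1 ∧ step p.1 p.2}) := by
  constructor
  · rintro ⟨V₁, E₁⟩ ⟨V₂, E₂⟩ ⟨h1, h2⟩
    rw [hF, hF]
    constructor
    · rintro x (hx | ⟨ς, hς, hs⟩)
      · exact Or.inl hx
      · exact Or.inr ⟨ς, h1 hς, hs⟩
    · rintro ⟨a, b⟩ ⟨ha, hs⟩
      exact ⟨h1 ha, hs⟩
  constructor
  · show F (_, _) = _
    rw [hF]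
    refine Prod.ext ?_ rfl
    ext x
    constructor
    · rintro (rfl | ⟨ς, hς, hs⟩)
      · exact Relation.ReflTransGen.refl
      · exact hς.tail hs
    · intro hx
      rcases hx.cases_tail with rfl | ⟨c, hc, hs⟩
      · exact Or.inl rfl
      · exact Or.inr ⟨c, hc, hs⟩
  · rintro ⟨V, E⟩ hfix
    rw [Set.mem_setOf_eq, hF] at hfix
    have hV : ∀ ς, Relation.ReflTransGen step ς₀ ς → ς ∈ V := by
      intro ς h
      induction h with
      | refl =>
        have : ς₀ ∈ ({ς₀} : Set State) ∪ {ς' | ∃ ς ∈ V, step ς ς'} := Or.inl rfl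
        rw [show ({ς₀} : Set State) ∪ {ς' | ∃ ς ∈ V, step ς ς'} = V from
          congrArg Prod.fst hfix] at this
        exact this
      | @tail b c _ h ih =>
        have : c ∈ ({ς₀} : Set State) ∪ {ς' | ∃ ς ∈ V, step ς ς'} :=
          Or.inr ⟨b, ih, h⟩
        rw [show ({ς₀} : Set State) ∪ {ς' | ∃ ς ∈ V, step ς ς'} = V from
          congrArg Prod.fst hfix] at this
        exact this
    refine ⟨fun ς h => hV ς h, ?_⟩
    rintro ⟨a, b⟩ ⟨hr, hs⟩
    have : (a, b) ∈ {p : State × State | p.1 ∈ V ∧ step p.1 p.2} := ⟨hV a hr, hs⟩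
    rw [show {p : State × State | p.1 ∈ V ∧ step p.1 p.2} = E from
      congrArg Prod.snd hfix] at this
    exact this
end

section
/- The frontier-based widened transfer function preserves the following invariant: if all stores occurring in the seen set S are totally ordered by ⊑ (form a chain) and σ is an upper bound of the stores occurring in S, and (S,F,σ) steps to (S ∪ S', F', σ'), then all stores occurring in S ∪ S' are totally ordered by ⊑ and σ' is an upper bound of the stores occurring in S ∪ S'. -/
/-- A store maps addresses to sets of values, ordered pointwise. -/
abbrev Store (Addr Value : Type*) := Addr → Set Value

/-- The frontier-based widened transfer function: given a seen set `S`, a frontier `F`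
and a store `σ`, it produces `(S ∪ S', F', σ')` where
`I = {(c',σ^c) | c ∈ F, wn(c,σ) ↦ wn(c',σ^c)}`, `σ' = σ ⊔ ⨆{σ^c | (c',σ^c) ∈ I}`,
`F' = {c' | (c',σ^c) ∈ I and (c',σ') ∉ S}`, and `S' = {(c',σ') | c' ∈ F'}`. -/
def Fstep {Addr Value Context : Type*}
    (step : Context × Store Addr Value → Context × Store Addr Value → Prop)
    (cfg : Set (Context × Store Addr Value) × Set Context × Store Addr Value) :
    Set (Context × Store Addr Value) × Set Context × Store Addr Value :=
  let S := cfg.1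
  let F := cfg.2.1
  let σ := cfg.2.2
  let I : Set (Context × Store Addr Value) := {p | ∃ c ∈ F, step (c, σ) p}
  let σ' : Store Addr Value := fun a => σ a ∪ ⋃ p ∈ I, p.2 a
  let F' : Set Context := {c' | (∃ σc, (c', σc) ∈ I) ∧ (c', σ') ∉ S}
  (S ∪ {p | p.1 ∈ F' ∧ p.2 = σ'}, F', σ')

/-- The frontier-based widened transfer function preserves the invariant
that all stores occurring in the seen set are totally ordered by `⊑` and that the
current store is an upper bound of them. -/
theorem stmt_2 {Addr Value Context : Type*}
    (step : Context × Store Addr Value → Context × Store Addr Value → Prop)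
    (hext : ∀ c σ c' σ', step (c, σ) (c', σ') → σ ≤ σ')
    (S : Set (Context × Store Addr Value)) (F : Set Context) (σ : Store Addr Value)
    (hchain : ∀ p ∈ S, ∀ q ∈ S, p.2 ≤ q.2 ∨ q.2 ≤ p.2)
    (hub : ∀ p ∈ S, p.2 ≤ σ) :
    (∀ p ∈ (Fstep step (S, F, σ)).1, ∀ q ∈ (Fstep step (S, F, σ)).1,
        p.2 ≤ q.2 ∨ q.2 ≤ p.2) ∧
    (∀ p ∈ (Fstep step (S, F, σ)).1, p.2 ≤ (Fstep step (S, F, σ)).2.2) := by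
  simp only [Fstep]
  set I : Set (Context × Store Addr Value) := {p | ∃ c ∈ F, step (c, σ) p} with hI
  set σ' : Store Addr Value := fun a => σ a ∪ ⋃ p ∈ I, p.2 a with hσ'
  have hσσ' : σ ≤ σ' := fun a => Set.subset_union_left
  have hub' : ∀ p ∈ S, p.2 ≤ σ' := fun p hp => le_trans (hub p hp) hσσ'
  constructor
  · rintro p (hp | hp) q (hq | hq)
    · exact hchain p hp q hq
    · exact Or.inl (hq.2 ▸ hub' p hp)
    · exact Or.inr (hp.2 ▸ hub' q hq)
    · exact Or.inl (hp.2 ▸ hq.2 ▸ le_refl _)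
  · rintro p (hp | hp)
    · exact hub' p hp
    · exact hp.2 ▸ le_refl _
end

section
/- The timestamped widened transfer function preserves the following invariant: if Σ is nonempty, strictly decreasing with respect to ⊐ from head to tail (each store strictly contains the next), and σ = head(Σ), and (Ŝ,F,σ,Σ,t) steps to (Ŝ ∪ Ŝ', F', σ', Σ', t'), then Σ' is nonempty, strictly decreasing with respect to ⊐ from head to tail, and σ' = head(Σ'). -/
open Classical

/-- The timestamped widened transfer function: given seen contexts tagged with
timestamps `Ŝ`, a frontier `F`, a store `σ`, a stack of stores `Sg` and a timestamp `t`,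
it produces `(Ŝ ∪ Ŝ', F', σ', Sg', t')` where
`I = {(c',σ^c) | c ∈ F, wn(c,σ) ↦ wn(c',σ^c)}`, `σ' = σ ⊔ ⨆{σ^c | (c',σ^c) ∈ I}`,
`(t',Sg') = (t+1, σ'::Sg)` if `σ' ≠ σ` and `(t,Sg)` otherwise,
`F' = {c' | (c',σ^c) ∈ I and (c',t') ∉ Ŝ}`, and `Ŝ' = {(c',t') | c' ∈ F'}`. -/
noncomputable def Tstep {Addr Value Context : Type*}
    (step : Context × Store Addr Value → Context × Store Addr Value → Prop)
    (cfg : Set (Context × ℕ) × Set Context × Store Addr Value × List (Store Addr Value) × ℕ) :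
    Set (Context × ℕ) × Set Context × Store Addr Value × List (Store Addr Value) × ℕ :=
  let Shat := cfg.1
  let F := cfg.2.1
  let σ := cfg.2.2.1
  let Sg := cfg.2.2.2.1
  let t := cfg.2.2.2.2
  let I : Set (Context × Store Addr Value) := {p | ∃ c ∈ F, step (c, σ) p}
  let σ' : Store Addr Value := fun a => σ a ∪ ⋃ p ∈ I, p.2 a
  let t' : ℕ := if σ' = σ then t else t + 1
  let Sg' : List (Store Addr Value) := if σ' = σ then Sg else σ' :: Sg
  let F' : Set Context := {c' | (∃ σc, (c', σc) ∈ I) ∧ (c', t') ∉ Shat}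
  (Shat ∪ {p | p.1 ∈ F' ∧ p.2 = t'}, F', σ', Sg', t')

/-- The timestamped widened transfer function preserves the invariant that
`Sg` is nonempty, strictly decreasing with respect to `⊐` from head to tail, and that the
current store is the head of `Sg`. -/
theorem stmt_3 {Addr Value Context : Type*}
    (step : Context × Store Addr Value → Context × Store Addr Value → Prop)
    (hext : ∀ c σ c' σ', step (c, σ) (c', σ') → σ ≤ σ')
    (Shat : Set (Context × ℕ)) (F : Set Context) (σ : Store Addr Value)
    (Sg : List (Store Addr Value)) (t : ℕ)
    (hne : Sg ≠ []) (hdec : List.Chain' (fun x y => y < x) Sg) (hhd : Sg.head? = some σ) :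
    (Tstep step (Shat, F, σ, Sg, t)).2.2.2.1 ≠ [] ∧
    List.Chain' (fun x y => y < x) (Tstep step (Shat, F, σ, Sg, t)).2.2.2.1 ∧
    (Tstep step (Shat, F, σ, Sg, t)).2.2.2.1.head? =
      some (Tstep step (Shat, F, σ, Sg, t)).2.2.1 := by
  simp only [Tstep]
  set I : Set (Context × Store Addr Value) := {p | ∃ c ∈ F, step (c, σ) p} with hI
  set σ' : Store Addr Value := fun a => σ a ∪ ⋃ p ∈ I, p.2 a with hσ'
  have hle : σ ≤ σ' := fun a => Set.subset_union_left
  by_cases h : σ' = σ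
  · simp only [h, if_pos rfl]
    exact ⟨hne, hdec, by simp [hhd]⟩
  · simp only [if_neg h]
    refine ⟨List.cons_ne_nil _ _, ?_, rfl⟩
    have hlt : ∀ y ∈ Sg.head?, y < σ' := by
      intro y hy
      rw [hhd] at hy
      cases hy
      exact lt_of_le_of_ne hle (fun e => h e.symm)
    exact List.IsChain.cons hdec hlt
end

section
/- The timestamped widened transfer function is a complete abstraction of the frontier-based widened transfer function: let T denote the (deterministic) timestamped transfer function, W the (deterministic) frontier-based transfer function, and define h(Ŝ,F,σ,Σ,t) := ({(c, nth(reverse Σ, n)) | (c,n) ∈ Ŝ}, F, σ), i.e., each timestamp n is replaced by the store at distance n from the end of Σ. Fix an initial context c₀ and let T₀ := ({(c₀,0)}, {c₀}, ⊥, [⊥], 0) and W₀ := ({(c₀,⊥)}, {c₀}, ⊥). Then for every n ∈ ℕ, h(Tⁿ(T₀)) = Wⁿ(W₀); moreover for all m, n ∈ ℕ, Tⁿ(T₀) = Tᵐ(T₀) if and only if Wⁿ(W₀) = Wᵐ(W₀), so the two iteration sequences are order-isomorphic. -/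
open Classical

/-- The frontier-based widened transfer function `W`. -/
def Wstep {Addr Value Context : Type*}
    (step : Context × Store Addr Value → Context × Store Addr Value → Prop)
    (cfg : Set (Context × Store Addr Value) × Set Context × Store Addr Value) :
    Set (Context × Store Addr Value) × Set Context × Store Addr Value :=
  let S := cfg.1
  let F := cfg.2.1
  let σ := cfg.2.2
  let I : Set (Context × Store Addr Value) := {p | ∃ c ∈ F, step (c, σ) p}
  let σ' : Store Addr Value := fun a => σ a ∪ ⋃ p ∈ I, p.2 a
  let F' : Set Context := {c' | (∃ σc, (c', σc) ∈ I) ∧ (c', σ') ∉ S}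
  (S ∪ {p | p.1 ∈ F' ∧ p.2 = σ'}, F', σ')

/-- The abstraction map `h`, replacing each timestamp `n` in the seen set by the store
at distance `n` from the end of the store stack `Σ`. -/
def habs {Addr Value Context : Type*}
    (cfg : Set (Context × ℕ) × Set Context × Store Addr Value × List (Store Addr Value) × ℕ) :
    Set (Context × Store Addr Value) × Set Context × Store Addr Value :=
  ({p | ∃ n, (p.1, n) ∈ cfg.1 ∧ cfg.2.2.2.1.reverse[n]? = some p.2}, cfg.2.1, cfg.2.2.1)

section Aux

variable {Addr Value Context : Type*}
  (step : Context × Store Addr Value → Context × Store Addr Value → Prop)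

/-- The set of successors of the frontier. -/
def Iset (F : Set Context) (σ : Store Addr Value) : Set (Context × Store Addr Value) :=
  {p | ∃ c ∈ F, step (c, σ) p}

/-- The widened next store. -/
def nextS (F : Set Context) (σ : Store Addr Value) : Store Addr Value :=
  fun a => σ a ∪ ⋃ p ∈ Iset step F σ, p.2 a

lemma le_nextS (F : Set Context) (σ : Store Addr Value) : σ ≤ nextS step F σ :=
  fun a => Set.subset_union_left

lemma Tstep_eq (Shat : Set (Context × ℕ)) (F : Set Context) (σ : Store Addr Value)
    (Sg : List (Store Addr Value)) (t : ℕ) :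
    Tstep step (Shat, F, σ, Sg, t) =
      (Shat ∪ {p | ((∃ σc, (p.1, σc) ∈ Iset step F σ) ∧
          (p.1, if nextS step F σ = σ then t else t + 1) ∉ Shat) ∧
          p.2 = if nextS step F σ = σ then t else t + 1},
        {c' | (∃ σc, (c', σc) ∈ Iset step F σ) ∧
          (c', if nextS step F σ = σ then t else t + 1) ∉ Shat},
        nextS step F σ,
        (if nextS step F σ = σ then Sg else nextS step F σ :: Sg),
        if nextS step F σ = σ then t else t + 1) := rfl

lemma Wstep_eq (S : Set (Context × Store Addr Value)) (F : Set Context)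
    (σ : Store Addr Value) :
    Wstep step (S, F, σ) =
      (S ∪ {p | ((∃ σc, (p.1, σc) ∈ Iset step F σ) ∧ (p.1, nextS step F σ) ∉ S) ∧
          p.2 = nextS step F σ},
        {c' | (∃ σc, (c', σc) ∈ Iset step F σ) ∧ (c', nextS step F σ) ∉ S},
        nextS step F σ) := rfl

/-- Invariant maintained by the timestamped iteration. -/
structure TInv
    (cfg : Set (Context × ℕ) × Set Context × Store Addr Value × List (Store Addr Value) × ℕ) :
    Prop where
  len : cfg.2.2.2.1.length = cfg.2.2.2.2 + 1
  head : cfg.2.2.2.1.reverse[cfg.2.2.2.2]? = some cfg.2.2.1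
  mono : ∀ i j : ℕ, i < j → ∀ si sj, cfg.2.2.2.1.reverse[i]? = some si →
      cfg.2.2.2.1.reverse[j]? = some sj → si ≤ sj ∧ si ≠ sj
  ts : ∀ p ∈ cfg.1, p.2 ≤ cfg.2.2.2.2

end Aux

section Core

variable {Addr Value Context : Type*}
  (step : Context × Store Addr Value → Context × Store Addr Value → Prop)

lemma habs_eq' (Shat : Set (Context × ℕ)) (F : Set Context) (σ : Store Addr Value)
    (Sg : List (Store Addr Value)) (t : ℕ) :
    habs (Shat, F, σ, Sg, t) =
      ({p | ∃ n, (p.1, n) ∈ Shat ∧ Sg.reverse[n]? = some p.2}, F, σ) := rfl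

lemma TInv_step {cfg : Set (Context × ℕ) × Set Context × Store Addr Value ×
    List (Store Addr Value) × ℕ} (h : TInv cfg) : TInv (Tstep step cfg) := by
  obtain ⟨Shat, F, σ, Sg, t⟩ := cfg
  have hlen : Sg.length = t + 1 := h.len
  have hrevlen : Sg.reverse.length = t + 1 := by simpa using hlen
  have hhead : Sg.reverse[t]? = some σ := h.head
  have hmono : ∀ i j : ℕ, i < j → ∀ si sj, Sg.reverse[i]? = some si →
      Sg.reverse[j]? = some sj → si ≤ sj ∧ si ≠ sj := h.mono
  have hts : ∀ p ∈ Shat, Prod.snd p ≤ t := h.ts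
  rw [Tstep_eq]
  by_cases hσ : nextS step F σ = σ
  · simp only [if_pos hσ]
    refine ⟨hlen, by rw [hσ]; exact hhead, hmono, ?_⟩
    rintro p (hp | hp)
    · exact hts p hp
    · exact le_of_eq hp.2
  · simp only [if_neg hσ]
    have hle : σ ≤ nextS step F σ := le_nextS step F σ
    have hentry : ∀ i si, i ≤ t → Sg.reverse[i]? = some si → si ≤ σ ∧ si ≠ nextS step F σ := by
      intro i si hi hget
      rcases lt_or_eq_of_le hi with hi' | hi'
      · obtain ⟨h1, h2⟩ := hmono i t hi' si σ hget hhead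
        refine ⟨h1, fun hc => ?_⟩
        exact hσ (le_antisymm (hc ▸ h1 : nextS step F σ ≤ σ) hle)
      · subst hi'
        rw [hhead] at hget
        obtain rfl := Option.some_injective _ hget.symm
        exact ⟨le_refl _, fun hc => hσ hc.symm⟩
    constructor
    · simpa using hlen
    · show (nextS step F σ :: Sg).reverse[t+1]? = some (nextS step F σ)
      rw [List.reverse_cons, List.getElem?_append]
      simp [hrevlen]
    · intro i j hij si sj hgi hgj
      show si ≤ sj ∧ si ≠ sj
      rw [List.reverse_cons] at hgi hgj
      have hj : j < t + 2 := by
        by_contra hc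
        rw [List.getElem?_eq_none (by simp [hrevlen]; omega)] at hgj
        exact Option.some_ne_none _ hgj.symm
      rw [List.getElem?_append] at hgi hgj
      rw [if_pos (by omega : i < Sg.reverse.length)] at hgi
      by_cases hj' : j < t + 1
      · rw [if_pos (by omega : j < Sg.reverse.length)] at hgj
        exact hmono i j hij si sj hgi hgj
      · have hj2 : j = t + 1 := by omega
        rw [if_neg (by omega : ¬ j < Sg.reverse.length)] at hgj
        have : sj = nextS step F σ := by
          have h5 : [nextS step F σ][j - Sg.reverse.length]? = some sj := hgj
          rw [hrevlen, hj2] at h5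
          simpa using h5.symm
        subst this
        obtain ⟨h1, h2⟩ := hentry i si (by omega) hgi
        exact ⟨le_trans h1 hle, h2⟩
    · rintro p (hp | hp)
      · exact le_trans (hts p hp) (Nat.le_succ t)
      · exact le_of_eq hp.2

lemma habs_Tstep {cfg : Set (Context × ℕ) × Set Context × Store Addr Value ×
    List (Store Addr Value) × ℕ} (h : TInv cfg) :
    habs (Tstep step cfg) = Wstep step (habs cfg) := by
  obtain ⟨Shat, F, σ, Sg, t⟩ := cfg
  have hlen : Sg.length = t + 1 := h.len
  have hrevlen : Sg.reverse.length = t + 1 := by simpa using hlen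
  have hhead : Sg.reverse[t]? = some σ := h.head
  have hmono : ∀ i j : ℕ, i < j → ∀ si sj, Sg.reverse[i]? = some si →
      Sg.reverse[j]? = some sj → si ≤ sj ∧ si ≠ sj := h.mono
  have hts : ∀ p ∈ Shat, Prod.snd p ≤ t := h.ts
  have hle : σ ≤ nextS step F σ := le_nextS step F σ
  rw [Tstep_eq, habs_eq', Wstep_eq]
  set σ' := nextS step F σ with hσ'def
  set S : Set (Context × Store Addr Value) :=
    {p | ∃ n, (p.1, n) ∈ Shat ∧ Sg.reverse[n]? = some p.2} with hSdef
  by_cases hσ : σ' = σ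
  · simp only [if_pos hσ]
    have key : ∀ c' : Context, ((c', t) ∈ Shat ↔ (c', σ') ∈ S) := by
      intro c'
      constructor
      · intro hc
        exact ⟨t, hc, by rw [hσ]; exact hhead⟩
      · rintro ⟨n, hn, hget⟩
        have hnt : n ≤ t := hts _ hn
        rcases lt_or_eq_of_le hnt with h' | h'
        · obtain ⟨_, h2⟩ := hmono n t h' σ' σ hget hhead
          exact absurd hσ h2
        · subst h'; exact hn
    rw [habs_eq']
    refine Prod.ext ?_ (Prod.ext ?_ rfl)
    · ext p
      simp only [hSdef, Set.mem_setOf_eq, Set.mem_union]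
      constructor
      · rintro ⟨n, (hn | hn), hget⟩
        · exact Or.inl ⟨n, hn, hget⟩
        · obtain ⟨⟨hI, hnin⟩, hnt⟩ := hn
          subst hnt
          rw [hhead] at hget
          have hp2 : p.2 = σ := (Option.some_injective _ hget).symm
          exact Or.inr ⟨⟨hI, fun hc => hnin ((key p.1).mpr hc)⟩, hp2.trans hσ.symm⟩
      · rintro (hp | ⟨⟨hI, hnin⟩, hp2⟩)
        · obtain ⟨n, hn, hget⟩ := hp
          exact ⟨n, Or.inl hn, hget⟩
        · refine ⟨t, Or.inr ⟨⟨hI, fun hc => hnin ((key p.1).mp hc)⟩, rfl⟩, ?_⟩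
          have hσ2 : nextS step F σ = σ := hσ
          rw [hp2, hσ2]; exact hhead
    · ext c'
      simp only [Set.mem_setOf_eq]
      exact and_congr_right fun _ => not_congr (key c')
  · simp only [if_neg hσ]
    have key : ∀ c' : Context, ¬ ((c', t + 1) ∈ Shat) ∧ ¬ ((c', σ') ∈ S) := by
      intro c'
      constructor
      · intro hc
        have hx : t + 1 ≤ t := hts _ hc
        omega
      · rintro ⟨n, hn, hget⟩
        have hnt : n ≤ t := hts _ hn
        rcases lt_or_eq_of_le hnt with h' | h'
        · obtain ⟨h1, _⟩ := hmono n t h' σ' σ hget hhead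
          exact hσ (le_antisymm h1 hle)
        · subst h'
          rw [hhead] at hget
          exact hσ (Option.some_injective _ hget.symm)
    have happend : ∀ n (x : Store Addr Value), n ≤ t →
        ((σ' :: Sg).reverse[n]? = some x ↔ Sg.reverse[n]? = some x) := by
      intro n x hn
      rw [List.reverse_cons, List.getElem?_append, if_pos (by omega : n < Sg.reverse.length)]
    have htop : (σ' :: Sg).reverse[t+1]? = some σ' := by
      rw [List.reverse_cons, List.getElem?_append, if_neg (by omega : ¬ t+1 < Sg.reverse.length)]
      simp [hrevlen]
    rw [habs_eq']
    refine Prod.ext ?_ (Prod.ext ?_ rfl)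
    · ext p
      simp only [hSdef, Set.mem_setOf_eq, Set.mem_union]
      constructor
      · rintro ⟨n, (hn | hn), hget⟩
        · have hnt : n ≤ t := hts _ hn
          rw [happend n p.2 hnt] at hget
          exact Or.inl ⟨n, hn, hget⟩
        · obtain ⟨⟨hI, _⟩, hnt⟩ := hn
          subst hnt
          rw [htop] at hget
          have hp2 : p.2 = σ' := (Option.some_injective _ hget).symm
          exact Or.inr ⟨⟨hI, (key p.1).2⟩, hp2⟩
      · rintro (hp | ⟨⟨hI, _⟩, hp2⟩)
        · obtain ⟨n, hn, hget⟩ := hp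
          have hnt : n ≤ t := hts _ hn
          exact ⟨n, Or.inl hn, (happend n p.2 hnt).mpr hget⟩
        · exact ⟨t + 1, Or.inr ⟨⟨hI, (key p.1).1⟩, rfl⟩, by rw [hp2]; exact htop⟩
    · ext c'
      simp only [Set.mem_setOf_eq]
      exact and_congr_right fun _ => iff_of_true (key c').1 (key c').2

end Core

section Main

variable {Addr Value Context : Type*}
  (step : Context × Store Addr Value → Context × Store Addr Value → Prop)

lemma habs_inj {c1 c2 : Set (Context × ℕ) × Set Context × Store Addr Value ×
    List (Store Addr Value) × ℕ} (h1 : TInv c1) (h2 : TInv c2)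
    (hSg : c1.2.2.2.1 = c2.2.2.2.1) (ht : c1.2.2.2.2 = c2.2.2.2.2)
    (hh : habs c1 = habs c2) : c1 = c2 := by
  obtain ⟨S1, F1, σ1, Sg1, t1⟩ := c1
  obtain ⟨S2, F2, σ2, Sg2, t2⟩ := c2
  simp only at hSg ht
  subst hSg ht
  have hF : F1 = F2 := congrArg (fun x => x.2.1) hh
  have hσ : σ1 = σ2 := congrArg (fun x => x.2.2) hh
  have hS : {p : Context × Store Addr Value | ∃ n, (p.1, n) ∈ S1 ∧ Sg1.reverse[n]? = some p.2}
      = {p | ∃ n, (p.1, n) ∈ S2 ∧ Sg1.reverse[n]? = some p.2} :=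
    congrArg (fun x => x.1) hh
  have hlen1 : Sg1.reverse.length = t1 + 1 := by
    have hl : Sg1.length = t1 + 1 := h1.len
    simpa using hl
  have hmono : ∀ i j : ℕ, i < j → ∀ si sj, Sg1.reverse[i]? = some si →
      Sg1.reverse[j]? = some sj → si ≤ sj ∧ si ≠ sj := h1.mono
  have sub : ∀ X Y : Set (Context × ℕ),
      (∀ p ∈ X, Prod.snd p ≤ t1) → (∀ p ∈ Y, Prod.snd p ≤ t1) →
      {p : Context × Store Addr Value | ∃ n, (p.1, n) ∈ X ∧ Sg1.reverse[n]? = some p.2}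
        = {p | ∃ n, (p.1, n) ∈ Y ∧ Sg1.reverse[n]? = some p.2} → X ⊆ Y := by
    intro X Y hX hY hXY
    rintro ⟨c, k⟩ hk
    have hkt : k ≤ t1 := hX _ hk
    have hlt : k < Sg1.reverse.length := by omega
    have hget : Sg1.reverse[k]? = some (Sg1.reverse[k]) := List.getElem?_eq_getElem hlt
    have hmem : (c, Sg1.reverse[k]) ∈
        {p : Context × Store Addr Value | ∃ n, (p.1, n) ∈ X ∧ Sg1.reverse[n]? = some p.2} :=
      ⟨k, hk, hget⟩
    rw [hXY] at hmem
    obtain ⟨k', hk', hget'⟩ := hmem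
    rcases lt_trichotomy k k' with h | h | h
    · exact absurd rfl (hmono k k' h _ _ hget hget').2
    · subst h; exact hk'
    · exact absurd rfl (hmono k' k h _ _ hget' hget).2
  have hS12 : S1 = S2 :=
    Set.Subset.antisymm (sub S1 S2 h1.ts h2.ts hS) (sub S2 S1 h2.ts h1.ts hS.symm)
  exact Prod.ext hS12 (Prod.ext hF (Prod.ext hσ rfl))

lemma Wstep_store (x : Set (Context × Store Addr Value) × Set Context × Store Addr Value) :
    (Wstep step x).2.2 = nextS step x.2.1 x.2.2 := rfl

lemma Tstep_Sg (x : Set (Context × ℕ) × Set Context × Store Addr Value ×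
    List (Store Addr Value) × ℕ) :
    (Tstep step x).2.2.2.1 =
      if nextS step x.2.1 x.2.2.1 = x.2.2.1 then x.2.2.2.1
      else nextS step x.2.1 x.2.2.1 :: x.2.2.2.1 := rfl

lemma Tstep_t (x : Set (Context × ℕ) × Set Context × Store Addr Value ×
    List (Store Addr Value) × ℕ) :
    (Tstep step x).2.2.2.2 =
      if nextS step x.2.1 x.2.2.1 = x.2.2.1 then x.2.2.2.2 else x.2.2.2.2 + 1 := rfl

end Main


/-- The timestamped widened transfer function is a complete abstraction of
the frontier-based widened transfer function: `h` carries every iterate of `T` from its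
initial configuration to the corresponding iterate of `W` from its initial
configuration, and iterates of `T` coincide exactly when the corresponding iterates of
`W` do, so the two iteration sequences are order-isomorphic. -/
theorem stmt_4 {Addr Value Context : Type*}
    (step : Context × Store Addr Value → Context × Store Addr Value → Prop)
    (hext : ∀ c σ c' σ', step (c, σ) (c', σ') → σ ≤ σ')
    (c₀ : Context) :
    (∀ n : ℕ,
      habs ((Tstep step)^[n] ({(c₀, 0)}, {c₀}, (fun _ => ∅), [fun _ => ∅], 0)) =
        (Wstep step)^[n] ({(c₀, fun _ => ∅)}, {c₀}, fun _ => ∅)) ∧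
    (∀ m n : ℕ,
      (Tstep step)^[n] ({(c₀, 0)}, {c₀}, (fun _ => ∅), [fun _ => ∅], 0) =
        (Tstep step)^[m] ({(c₀, 0)}, {c₀}, (fun _ => ∅), [fun _ => ∅], 0) ↔
      (Wstep step)^[n] ({(c₀, fun _ => ∅)}, {c₀}, fun _ => ∅) =
        (Wstep step)^[m] ({(c₀, fun _ => ∅)}, {c₀}, fun _ => ∅)) := by
  clear hext
  set f := Tstep step with hf
  set g := Wstep step with hg
  set A : Set (Context × ℕ) × Set Context × Store Addr Value ×
      List (Store Addr Value) × ℕ :=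
    ({(c₀, 0)}, {c₀}, (fun _ => ∅), [fun _ => ∅], 0) with hA
  set B : Set (Context × Store Addr Value) × Set Context × Store Addr Value :=
    ({(c₀, fun _ => ∅)}, {c₀}, fun _ => ∅) with hB
  have inv0 : TInv A := by
    refine ⟨by simp [hA], by simp [hA], ?_, ?_⟩
    · intro i j hij si sj hgi hgj
      exfalso
      rcases j with _ | j
      · omega
      · rw [hA] at hgj
        simp at hgj
    · intro p hp
      rw [hA, Set.mem_singleton_iff] at hp
      subst hp
      exact le_refl 0
  have invn : ∀ n, TInv (f^[n] A) := by
    intro n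
    induction n with
    | zero => exact inv0
    | succ n ih =>
      rw [Function.iterate_succ_apply']
      exact TInv_step step ih
  have h0 : habs A = B := by
    rw [hA, habs_eq', hB]
    refine Prod.ext ?_ rfl
    ext p
    simp only [Set.mem_setOf_eq, Set.mem_singleton_iff]
    constructor
    · rintro ⟨n, hn, hget⟩
      rw [Prod.mk.injEq] at hn
      obtain ⟨h1, h2⟩ := hn
      subst h2
      simp only [List.reverse_singleton] at hget
      have : p.2 = fun _ => (∅ : Set Value) := by
        simpa using hget.symm
      exact Prod.ext h1 this
    · intro hp
      subst hp
      exact ⟨0, rfl, by simp⟩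
  have part1 : ∀ n, habs (f^[n] A) = g^[n] B := by
    intro n
    induction n with
    | zero => exact h0
    | succ n ih =>
      rw [Function.iterate_succ_apply', Function.iterate_succ_apply', hf, hg,
        habs_Tstep step (invn n), ih]
  refine ⟨part1, ?_⟩
  have wstore : ∀ k, (g^[k+1] B).2.2 = nextS step (g^[k] B).2.1 (g^[k] B).2.2 := by
    intro k
    rw [Function.iterate_succ_apply', hg]
    exact Wstep_store step _
  have wmono : ∀ k l, k ≤ l → (g^[k] B).2.2 ≤ (g^[l] B).2.2 := by
    intro k l hkl
    induction l, hkl using Nat.le_induction with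
    | base => exact le_refl _
    | succ l hkl ih =>
      refine le_trans ih ?_
      rw [wstore l]
      exact le_nextS step _ _
  have key2 : ∀ n m, n ≤ m → g^[n] B = g^[m] B → f^[n] A = f^[m] A := by
    intro n m hnm hw
    have hconst : ∀ k, n ≤ k → k ≤ m → (g^[k] B).2.2 = (g^[n] B).2.2 := by
      intro k h1 h2
      have e : (g^[n] B).2.2 = (g^[m] B).2.2 := congrArg (fun x => x.2.2) hw
      exact le_antisymm (le_trans (wmono k m h2) (le_of_eq e.symm)) (wmono n k h1)
    have claim : ∀ k, n ≤ k → k ≤ m →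
        (f^[k] A).2.2.2.1 = (f^[n] A).2.2.2.1 ∧ (f^[k] A).2.2.2.2 = (f^[n] A).2.2.2.2 := by
      intro k hk1
      induction k, hk1 using Nat.le_induction with
      | base => exact fun _ => ⟨rfl, rfl⟩
      | succ k hk ih =>
        intro hk2
        obtain ⟨ihSg, iht⟩ := ih (by omega)
        have hFk : (f^[k] A).2.1 = (g^[k] B).2.1 := by
          rw [← part1 k]; rfl
        have hσk : (f^[k] A).2.2.1 = (g^[k] B).2.2 := by
          rw [← part1 k]; rfl
        have hcond : nextS step (f^[k] A).2.1 (f^[k] A).2.2.1 = (f^[k] A).2.2.1 := by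
          rw [hFk, hσk, ← wstore k,
            hconst (k+1) (by omega) (by omega), hconst k (by omega) (by omega)]
        rw [Function.iterate_succ_apply', hf, Tstep_Sg step, Tstep_t step,
          if_pos hcond, if_pos hcond]
        exact ⟨ihSg, iht⟩
    refine habs_inj (invn n) (invn m) ?_ ?_ ?_
    · exact (claim m hnm le_rfl).1.symm
    · exact (claim m hnm le_rfl).2.symm
    · rw [part1 n, part1 m, hw]
  intro m n
  constructor
  · intro h
    rw [← part1 n, ← part1 m, h]
  · intro h
    rcases le_total n m with hle | hle
    · exact key2 n m hle h
    · exact (key2 m n hle h.symm).symm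
end

section
/- Replaying a store-delta log detects change correctly: for every log ξ : List (Addr × Set Value) and store σ, if replay ξ σ = (σ', Δ?), then σ' ≠ σ if and only if Δ?. That is, the replayed store differs from σ exactly when some entry (a,vs) of ξ satisfies ¬ vs ⊆ σ a. -/
/-- Replaying a store-delta log `ξ` on a store `σ` produces the store
`σ' a := σ a ∪ ⋃ {vs | (a,vs) is an entry of ξ}` together with the change flag `Δ?`,
which holds iff some entry `(a,vs)` of `ξ` satisfies `¬ vs ⊆ σ a`. -/
def replay {Addr Value : Type*} (ξ : List (Addr × Set Value)) (σ : Addr → Set Value) :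
    (Addr → Set Value) × Prop :=
  (fun a => σ a ∪ ⋃ vs ∈ {vs | (a, vs) ∈ ξ}, vs, ∃ p ∈ ξ, ¬ p.2 ⊆ σ p.1)

/-- Replaying a store-delta log detects change correctly: the replayed
store differs from `σ` exactly when the change flag holds, i.e. exactly when some entry
`(a,vs)` of `ξ` satisfies `¬ vs ⊆ σ a`. -/
theorem stmt_5 {Addr Value : Type*} (ξ : List (Addr × Set Value)) (σ : Addr → Set Value) :
    ((replay ξ σ).1 ≠ σ ↔ (replay ξ σ).2) ∧
    ((replay ξ σ).1 ≠ σ ↔ ∃ p ∈ ξ, ¬ p.2 ⊆ σ p.1) := by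
  have key : (replay ξ σ).1 ≠ σ ↔ ∃ p ∈ ξ, ¬ p.2 ⊆ σ p.1 := by
    constructor
    · intro h
      by_contra hc
      push_neg at hc
      apply h
      funext a
      simp only [replay, Set.union_eq_left]
      intro v hv
      simp only [Set.mem_iUnion, Set.mem_setOf_eq] at hv
      obtain ⟨vs, hmem, hvvs⟩ := hv
      exact hc (a, vs) hmem hvvs
    · rintro ⟨⟨a, vs⟩, hmem, hsub⟩ heq
      apply hsub
      intro v hv
      have : v ∈ (replay ξ σ).1 a := by
        simp only [replay, Set.mem_union, Set.mem_iUnion, Set.mem_setOf_eq]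
        exact Or.inr ⟨vs, hmem, hv⟩
      rwa [heq] at this
  exact ⟨key.trans (Iff.rfl), key⟩
end

section
/- Replaying store-delta logs is compatible with concatenation and independent of order: for all logs ξ₁, ξ₂ and every store σ, (replay (ξ₁ ++ ξ₂) σ).1 = (replay ξ₁ σ).1 ⊔ (replay ξ₂ σ).1 and (replay (ξ₁ ++ ξ₂) σ).2 = (replay ξ₁ σ).2 ∨ (replay ξ₂ σ).2; consequently, if ξ and ξ' are permutations of one another (as lists of entries), then replay ξ σ = replay ξ' σ, so the result of combining and replaying the change logs of several steps does not depend on the order of combination. -/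
/-- Replaying store-delta logs is compatible with concatenation and
independent of order: replaying `ξ₁ ++ ξ₂` yields the (pointwise) join of the two
replayed stores and the disjunction of the two change flags; consequently replaying is
invariant under permutation of the log. -/
theorem stmt_6 {Addr Value : Type*} :
    (∀ (ξ₁ ξ₂ : List (Addr × Set Value)) (σ : Addr → Set Value),
      (replay (ξ₁ ++ ξ₂) σ).1 = (fun a => (replay ξ₁ σ).1 a ∪ (replay ξ₂ σ).1 a) ∧
      ((replay (ξ₁ ++ ξ₂) σ).2 ↔ ((replay ξ₁ σ).2 ∨ (replay ξ₂ σ).2))) ∧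
    (∀ (ξ ξ' : List (Addr × Set Value)) (σ : Addr → Set Value),
      ξ.Perm ξ' → replay ξ σ = replay ξ' σ) := by
  constructor
  · intro ξ₁ ξ₂ σ
    constructor
    · funext a
      simp only [replay, Set.mem_setOf_eq, List.mem_append]
      ext v
      simp only [Set.mem_union, Set.mem_iUnion]
      constructor
      · rintro (hv | ⟨vs, hm | hm, hv⟩)
        · exact Or.inl (Or.inl hv)
        · exact Or.inl (Or.inr ⟨vs, hm, hv⟩)
        · exact Or.inr (Or.inr ⟨vs, hm, hv⟩)
      · rintro ((hv | ⟨vs, hm, hv⟩) | (hv | ⟨vs, hm, hv⟩))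
        · exact Or.inl hv
        · exact Or.inr ⟨vs, Or.inl hm, hv⟩
        · exact Or.inl hv
        · exact Or.inr ⟨vs, Or.inr hm, hv⟩
    · simp only [replay, List.mem_append]
      constructor
      · rintro ⟨p, hm | hm, hns⟩
        · exact Or.inl ⟨p, hm, hns⟩
        · exact Or.inr ⟨p, hm, hns⟩
      · rintro (⟨p, hm, hns⟩ | ⟨p, hm, hns⟩)
        · exact ⟨p, Or.inl hm, hns⟩
        · exact ⟨p, Or.inr hm, hns⟩
  · intro ξ ξ' σ h
    simp only [replay, Prod.mk.injEq]
    constructor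
    · funext a
      have : ∀ vs, (a, vs) ∈ ξ ↔ (a, vs) ∈ ξ' := fun vs => h.mem_iff
      simp only [Set.mem_setOf_eq]
      ext v
      simp only [Set.mem_union, Set.mem_iUnion]
      constructor <;> rintro (hv | ⟨vs, hm, hv⟩)
      · exact Or.inl hv
      · exact Or.inr ⟨vs, (this vs).1 hm, hv⟩
      · exact Or.inl hv
      · exact Or.inr ⟨vs, (this vs).2 hm, hv⟩
    · apply propext
      constructor <;> rintro ⟨p, hp, hns⟩
      · exact ⟨p, h.mem_iff.1 hp, hns⟩
      · exact ⟨p, h.mem_iff.2 hp, hns⟩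
end

section
/- Stores of value stacks completely abstract stacks of stores: for every t ∈ ℕ, the map sending a store of value stacks σ̂ that is well-formed at time t to its list of snapshots [snap σ̂ t, snap σ̂ (t−1), …, snap σ̂ 0] is a bijection from {σ̂ : Addr → ValStack | σ̂ is well-formed at time t} onto the set of ⊑-increasing chains of stores of length t+1, i.e., onto {(σ_0, σ_1, …, σ_t) | ∀ s < t, σ_s ⊑ σ_{s+1}} (listed here with σ_t first). In particular, distinct well-formed stores of value stacks have distinct snapshot lists, and every chain of stores arises as the snapshot list of exactly one well-formed store of value stacks. -/
/-- A value stack: a list of timestamped sets of values. -/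
abbrev ValStack (Value : Type*) := List (ℕ × Set Value)

/-- `lookup V s` is the value set of the first entry of `V` (from the head) whose
timestamp is `≤ s`, and `∅` if there is no such entry. -/
def lookup {Value : Type*} : ValStack Value → ℕ → Set Value
  | [], _ => ∅
  | (t', vs) :: V, s => if t' ≤ s then vs else lookup V s

/-- The snapshot of a store of value stacks at time `s`. -/
def snap {Addr Value : Type*} (σ : Addr → ValStack Value) (s : ℕ) : Addr → Set Value :=
  fun a => lookup (σ a) s

/-- A store of value stacks is well-formed at time `t` if, at every address, the
timestamps are strictly decreasing from head to tail and all `≤ t`, and the value sets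
are nonempty and strictly increasing from tail to head (each entry's set strictly
contains the set of the next older entry). -/
def WFat {Addr Value : Type*} (σ : Addr → ValStack Value) (t : ℕ) : Prop :=
  ∀ a, List.Chain' (fun p q => q.1 < p.1 ∧ q.2 ⊂ p.2) (σ a) ∧
    ∀ p ∈ σ a, p.1 ≤ t ∧ p.2.Nonempty

namespace Aux
variable {Value : Type*}

/-- the entry relation -/
def R : (ℕ × Set Value) → (ℕ × Set Value) → Prop := fun p q => q.1 < p.1 ∧ q.2 ⊂ p.2

instance : IsTrans (ℕ × Set Value) R :=
  ⟨fun _ _ _ h1 h2 => ⟨h2.1.trans h1.1, h2.2.trans h1.2⟩⟩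

lemma lookup_cases (V : ValStack Value) (s : ℕ) :
    lookup V s = ∅ ∨ ∃ p ∈ V, p.1 ≤ s ∧ lookup V s = p.2 := by
  induction V with
  | nil => left; rfl
  | cons p W ih =>
    by_cases h : p.1 ≤ s
    · right; exact ⟨p, List.mem_cons_self, h, by simp [lookup, h]⟩
    · rcases ih with h1 | ⟨q, hq, hqs, hl⟩
      · left; simpa [lookup, h] using h1
      · right; exact ⟨q, List.mem_cons_of_mem _ hq, hqs, by simpa [lookup, h] using hl⟩

lemma lookup_mono {V : ValStack Value} (hV : List.Pairwise R V) {s s' : ℕ} (h : s ≤ s') :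
    lookup V s ⊆ lookup V s' := by
  induction V with
  | nil => simp [lookup]
  | cons p W ih =>
    rcases List.pairwise_cons.1 hV with ⟨hhead, hW⟩
    by_cases hp : p.1 ≤ s
    · simp [lookup, hp, hp.trans h]
    · by_cases hp' : p.1 ≤ s'
      · simp only [lookup, if_neg hp, if_pos hp']
        rcases lookup_cases W s with h0 | ⟨q, hq, _, hl⟩
        · simp [h0]
        · rw [hl]; exact (hhead q hq).2.subset
      · simpa [lookup, hp, hp'] using ih hW

def WFs (V : ValStack Value) (t : ℕ) : Prop :=
  List.Pairwise R V ∧ ∀ p ∈ V, p.1 ≤ t ∧ p.2.Nonempty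

lemma stack_eq : ∀ (V : ValStack Value) (t : ℕ) (V' : ValStack Value), WFs V t → WFs V' t →
    (∀ s ≤ t, lookup V s = lookup V' s) → V = V' := by
  intro V
  induction V with
  | nil =>
    intro t V' _ hV' heq
    cases V' with
    | nil => rfl
    | cons q W' =>
      exfalso
      have h1 := (hV'.2 q (List.mem_cons_self))
      have := heq t le_rfl
      rw [show lookup ([] : ValStack Value) t = ∅ from rfl] at this
      simp only [lookup, if_pos h1.1] at this
      exact h1.2.ne_empty this.symm
  | cons p W ih =>
    intro t V' hV hV' heq
    cases V' with
    | nil =>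
      exfalso
      have h1 := (hV.2 p (List.mem_cons_self))
      have := heq t le_rfl
      simp only [lookup, if_pos h1.1] at this
      exact h1.2.ne_empty this
    | cons q W' =>
      have hp1 : p.1 ≤ t := (hV.2 p (List.mem_cons_self)).1
      have hq1 : q.1 ≤ t := (hV'.2 q (List.mem_cons_self)).1
      have hsets : p.2 = q.2 := by
        have := heq t le_rfl
        simpa [lookup, hp1, hq1] using this
      rcases List.pairwise_cons.1 hV.1 with ⟨hheadV, hWpw⟩
      rcases List.pairwise_cons.1 hV'.1 with ⟨hheadV', hW'pw⟩
      have ht : p.1 = q.1 := by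
        rcases lt_trichotomy p.1 q.1 with hlt | heqt | hgt
        · exfalso
          have h1 := heq p.1 hp1
          simp only [lookup, if_pos le_rfl, if_neg (not_le.2 hlt)] at h1
          rcases lookup_cases W' p.1 with h0 | ⟨r, hr, _, hl⟩
          · rw [h0] at h1
            exact (hV.2 p (List.mem_cons_self)).2.ne_empty h1
          · rw [hl] at h1
            exact (hheadV' r hr).2.ne (hsets ▸ h1).symm
        · exact heqt
        · exfalso
          have h1 := heq q.1 hq1
          simp only [lookup, if_pos le_rfl, if_neg (not_le.2 hgt)] at h1
          rcases lookup_cases W q.1 with h0 | ⟨r, hr, _, hl⟩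
          · rw [h0] at h1
            exact (hV'.2 q (List.mem_cons_self)).2.ne_empty h1.symm
          · rw [hl] at h1
            exact (hheadV r hr).2.ne (h1.trans hsets.symm)
      -- now the tails
      rcases Nat.eq_zero_or_pos p.1 with h0 | hpos
      · have hWnil : W = [] := by
          cases W with
          | nil => rfl
          | cons r W2 => exact absurd ((hheadV r (List.mem_cons_self)).1) (by omega)
        have hW'nil : W' = [] := by
          cases W' with
          | nil => rfl
          | cons r W2 => exact absurd ((hheadV' r (List.mem_cons_self)).1) (by omega)
        subst hWnil hW'nil
        have : p = q := Prod.ext (ht) hsets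
        rw [this]
      · have htails : W = W' := by
          apply ih (p.1 - 1)
          · exact ⟨hWpw, fun r hr => ⟨by have := (hheadV r hr).1; omega, (hV.2 r (List.mem_cons_of_mem _ hr)).2⟩⟩
          · exact ⟨hW'pw, fun r hr => ⟨by have := (hheadV' r hr).1; omega, (hV'.2 r (List.mem_cons_of_mem _ hr)).2⟩⟩
          · intro s hs
            have hs1 : ¬ p.1 ≤ s := by omega
            have hs2 : ¬ q.1 ≤ s := by omega
            have := heq s (by omega)
            simpa [lookup, hs1, hs2] using this
        rw [htails, Prod.ext ht hsets]

open Classical in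
noncomputable def build (f : ℕ → Set Value) : ℕ → ValStack Value
  | 0 => if f 0 = ∅ then [] else [(0, f 0)]
  | (t+1) => if f (t+1) = f t then build f t else (t+1, f (t+1)) :: build f t

lemma build_mem {f : ℕ → Set Value} (hf : Monotone f) :
    ∀ t, (∀ p ∈ build f t, p.1 ≤ t ∧ p.2 = f p.1 ∧ p.2.Nonempty) := by
  intro t
  induction t with
  | zero =>
    intro p hp
    simp only [build] at hp
    split_ifs at hp with h
    · simp at hp
    · simp only [List.mem_singleton] at hp
      subst hp
      exact ⟨le_rfl, rfl, Set.nonempty_iff_ne_empty.2 h⟩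
  | succ n ihn =>
    intro p hp
    simp only [build] at hp
    split_ifs at hp with h
    · obtain ⟨h1, h2, h3⟩ := ihn p hp
      exact ⟨h1.trans (Nat.le_succ n), h2, h3⟩
    · rcases List.mem_cons.1 hp with rfl | hp
      · refine ⟨le_rfl, rfl, Set.nonempty_iff_ne_empty.2 ?_⟩
        intro he
        exact h (he.trans (Set.eq_empty_of_subset_empty (he ▸ hf (Nat.le_succ n))).symm)
      · obtain ⟨h1, h2, h3⟩ := ihn p hp
        exact ⟨h1.trans (Nat.le_succ n), h2, h3⟩

lemma build_pairwise {f : ℕ → Set Value} (hf : Monotone f) :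
    ∀ t, List.Pairwise R (build f t) := by
  intro t
  induction t with
  | zero =>
    simp only [build]
    split_ifs <;> simp
  | succ n ihn =>
    simp only [build]
    split_ifs with h
    · exact ihn
    · refine List.pairwise_cons.2 ⟨fun p hp => ?_, ihn⟩
      obtain ⟨h1, h2, _⟩ := build_mem hf n p hp
      refine ⟨by omega, ?_⟩
      have hn : f n ⊂ f (n + 1) := lt_of_le_of_ne (hf (Nat.le_succ n)) (Ne.symm h)
      exact lt_of_le_of_lt (h2 ▸ hf h1 : p.2 ≤ f n) hn

lemma lookup_build {f : ℕ → Set Value} (hf : Monotone f) :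
    ∀ t s, lookup (build f t) s = f (min s t) := by
  intro t
  induction t with
  | zero =>
    intro s
    simp only [build, Nat.min_zero]
    split_ifs with h
    · simp [lookup, h]
    · simp [lookup, Nat.zero_le]
  | succ n ihn =>
    intro s
    simp only [build]
    split_ifs with h
    · rw [ihn s]
      rcases le_or_gt s n with hs | hs
      · rw [min_eq_left hs, min_eq_left (hs.trans (Nat.le_succ n))]
      · rw [min_eq_right (by omega : n ≤ s), min_eq_right (by omega : n + 1 ≤ s), h]
    · simp only [lookup]
      split_ifs with hs
      · rw [min_eq_right hs]
      · rw [ihn s, min_eq_left (by omega : s ≤ n), min_eq_left (by omega : s ≤ n + 1)]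
end Aux

lemma wfat_iff {Addr Value : Type*} {σ : Addr → ValStack Value} {t : ℕ} :
    WFat σ t ↔ ∀ a, Aux.WFs (σ a) t := by
  haveI : IsTrans (ℕ × Set Value) (fun p q : ℕ × Set Value => q.1 < p.1 ∧ q.2 ⊂ p.2) :=
    ⟨fun _ _ _ h1 h2 => ⟨h2.1.trans h1.1, h2.2.trans h1.2⟩⟩
  unfold WFat Aux.WFs Aux.R
  constructor
  · intro h a
    exact ⟨List.isChain_iff_pairwise.mp (h a).1, (h a).2⟩
  · intro h a
    exact ⟨List.isChain_iff_pairwise.mpr (h a).1, (h a).2⟩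

/-- Stores of value stacks completely abstract stacks of stores: for every
`t`, the map sending a store of value stacks well-formed at time `t` to its list of
snapshots `[snap σ t, snap σ (t-1), …, snap σ 0]` is a bijection onto the set of
`⊑`-increasing chains of stores of length `t+1` (listed with the `t`-th store first). -/
theorem stmt_10 {Addr Value : Type*} (t : ℕ) :
    Set.BijOn (fun σ : Addr → ValStack Value => (List.range (t + 1)).reverse.map (snap σ))
      {σ | WFat σ t}
      {L : List (Addr → Set Value) |
        L.length = t + 1 ∧ List.Chain' (fun x y => y ≤ x) L} := by
  classical
  have hMget : ∀ (σ : Addr → ValStack Value) (i : ℕ) (hi : i < t + 1),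
      ((List.range (t + 1)).reverse.map (snap σ))[i]'(by simpa using hi) = snap σ (t - i) := by
    intro σ i hi
    rw [List.getElem_map, List.getElem_reverse, List.getElem_range, List.length_range,
      show t + 1 - 1 - i = t - i by omega]
  refine ⟨?_, ?_, ?_⟩
  · -- MapsTo
    intro σ hσ
    rw [Set.mem_setOf_eq, wfat_iff] at hσ
    refine ⟨by simp, ?_⟩
    rw [List.Chain', List.isChain_map, List.isChain_reverse, List.isChain_range_succ]
    intro m _ a
    exact Aux.lookup_mono (hσ a).1 (Nat.le_succ m)
  · -- InjOn
    intro σ hσ σ' hσ' heq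
    rw [Set.mem_setOf_eq, wfat_iff] at hσ hσ'
    funext a
    refine Aux.stack_eq (σ a) t (σ' a) (hσ a) (hσ' a) ?_
    intro s hs
    have hi : t - s < t + 1 := by omega
    have h1 : snap σ (t - (t - s)) = snap σ' (t - (t - s)) := by
      rw [← hMget σ _ hi, ← hMget σ' _ hi]
      simp only [heq]
    have hts : t - (t - s) = s := by omega
    rw [hts] at h1
    exact congrFun h1 a
  · -- SurjOn
    rintro L ⟨hlen, hchain⟩
    haveI : IsTrans (Addr → Set Value) (fun x y : Addr → Set Value => y ≤ x) :=
      ⟨fun _ _ _ h1 h2 => h2.trans h1⟩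
    have hpw := List.isChain_iff_pairwise.mp hchain
    rw [List.pairwise_iff_getElem] at hpw
    set g : ℕ → Addr → Set Value := fun s => L.getD (t - min s t) (fun _ => ∅) with hg
    have hgget : ∀ s, g s = L[t - min s t]'(by omega) := by
      intro s
      rw [hg]
      exact List.getD_eq_getElem L _ (by omega)
    have hmono : ∀ a, Monotone (fun s => g s a) := by
      intro a s s' hss
      have h1 : t - min s' t ≤ t - min s t := by omega
      rcases eq_or_lt_of_le h1 with h2 | h2
      · have hgeq : g s = g s' := by simp only [hg, h2]
        exact le_of_eq (congrFun hgeq a)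
      · simp only [hgget]
        exact (hpw _ _ (by omega) (by omega) h2) a
    refine ⟨fun a => Aux.build (fun s => g s a) t, ?_, ?_⟩
    · rw [Set.mem_setOf_eq, wfat_iff]
      intro a
      refine ⟨Aux.build_pairwise (hmono a) t, fun p hp => ?_⟩
      obtain ⟨h1, _, h3⟩ := Aux.build_mem (hmono a) t p hp
      exact ⟨h1, h3⟩
    · refine List.ext_getElem (by simpa using hlen.symm) ?_
      intro i hi hi'
      have hit : i < t + 1 := by simpa using hi
      rw [hMget _ i hit]
      funext a
      show lookup (Aux.build (fun s => g s a) t) (t - i) = L[i] a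
      rw [Aux.lookup_build (hmono a) t (t - i)]
      have h1 : min (t - i) t = t - i := by omega
      have h2 : t - (t - i) = i := by omega
      have h3 := hgget (t - i)
      simp only [h1, h2] at h3
      rw [h1]
      exact congrFun h3 a
end
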